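/- The intermediate extension commutes with duality (third assertion of the lemma on properties of j_!*): given abelian recollement gluing data together with contravariant equivalences D : 𝒜ᵒᵖ → 𝒜 and D_U : 𝒜_Uᵒᵖ → 𝒜_U and a natural isomorphism j^* ∘ D ≅ D_U ∘ (j^*)ᵒᵖ, there is for every object N of 𝒜_U an isomorphism D(j_!* N) ≅ j_!*( D_U N ). -/

import Mathlib

/-!
Abelian recollement gluing data, abstracting the open immersion `j : U → S`:
abelian categories `A` and `B` (the latter playing the role of `𝒜_U`), an exact
functor `jstar : A ⥤ B` with a left adjoint `jlow` (`j_!`) and a right adjoint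
`jup` (`j_*`), such that the unit of `j_! ⊣ j^*` and the counit of `j^* ⊣ j_*`
are isomorphisms.  For `N : B`, `cmap N : j_! N ⟶ j_* N` is the unique morphism
whose image under `j^*` is `id_N` (under the canonical identifications), and the
intermediate extension `j_!* N` is its image.  "`X` is supported on `Z`" means
`j^* X ≅ 0`, i.e. `IsZero (jstar.obj X)`.
-/

open CategoryTheory CategoryTheory.Limits

variable {A : Type*} [Category A] [Abelian A]
variable {B : Type*} [Category B] [Abelian B]

/-- The canonical morphism `c_N : j_! N ⟶ j_* N`, corresponding under the
adjunction `j_! ⊣ j^*` to the inverse of the counit `j^* j_* N ≅ N`. -/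
noncomputable def cmap (jstar : A ⥤ B) (jlow jup : B ⥤ A)
    (adj1 : jlow ⊣ jstar) (adj2 : jstar ⊣ jup) [IsIso adj2.counit] (N : B) :
    jlow.obj N ⟶ jup.obj N :=
  (adj1.homEquiv N (jup.obj N)).symm (inv (adj2.counit.app N))

/-- The intermediate extension `j_!* N := Im (c_N : j_! N ⟶ j_* N)`. -/
noncomputable def interExt (jstar : A ⥤ B) (jlow jup : B ⥤ A)
    (adj1 : jlow ⊣ jstar) (adj2 : jstar ⊣ jup) [IsIso adj2.counit] (N : B) : A :=
  image (cmap jstar jlow jup adj1 adj2 N)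

section AuxGeneral

open Opposite

variable {C₁ : Type*} [Category C₁] {C₂ : Type*} [Category C₂] {C₃ : Type*} [Category C₃]

/-- The counit of a composite adjunction is an isomorphism if both counits are. -/
lemma aux_isIso_comp_counit {F : C₁ ⥤ C₂} {G : C₂ ⥤ C₁} {H : C₂ ⥤ C₃} {I : C₃ ⥤ C₂}
    (adj₁ : F ⊣ G) (adj₂ : H ⊣ I) [IsIso adj₁.counit] [IsIso adj₂.counit] :
    IsIso ((adj₁.comp adj₂).counit) := by
  have : ∀ X, IsIso ((adj₁.comp adj₂).counit.app X) := by
    intro X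
    rw [Adjunction.comp_counit_app]
    infer_instance
  exact NatIso.isIso_of_isIso_app _

/-- The counit of an adjunction transported along a natural isomorphism of the left
adjoints, componentwise. -/
lemma aux_ofNatIsoLeft_counit_app {F G : C₁ ⥤ C₂} {H : C₂ ⥤ C₁} (adj : F ⊣ H) (ρ : F ≅ G)
    (x : C₂) :
    (adj.ofNatIsoLeft ρ).counit.app x = ρ.inv.app (H.obj x) ≫ adj.counit.app x := by
  have h2 : (adj.ofNatIsoLeft ρ).counit.app x =
      ((adj.ofNatIsoLeft ρ).homEquiv (H.obj x) x).symm (𝟙 _) := by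
    rw [Adjunction.homEquiv_counit]
    simp
  rw [h2]
  simp [Adjunction.ofNatIsoLeft, Adjunction.homEquiv_counit]

lemma aux_isIso_ofNatIsoLeft_counit {F G : C₁ ⥤ C₂} {H : C₂ ⥤ C₁} (adj : F ⊣ H) (ρ : F ≅ G)
    [IsIso adj.counit] : IsIso ((adj.ofNatIsoLeft ρ).counit) := by
  have : ∀ X, IsIso ((adj.ofNatIsoLeft ρ).counit.app X) := by
    intro X
    rw [aux_ofNatIsoLeft_counit_app]
    infer_instance
  exact NatIso.isIso_of_isIso_app _

lemma aux_ofNatIsoRight_homEquiv_symm {F : C₁ ⥤ C₂} {G H : C₂ ⥤ C₁} (adj : F ⊣ G) (ρ : G ≅ H)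
    {X : C₁} {Y : C₂} (g : X ⟶ H.obj Y) :
    ((adj.ofNatIsoRight ρ).homEquiv X Y).symm g = (adj.homEquiv X Y).symm (g ≫ ρ.inv.app Y) := by
  simp [Adjunction.ofNatIsoRight, Adjunction.homEquiv_counit]

/-- The opposite adjunction counit `(j^*)ᵒᵖ ⊣ (j_!)ᵒᵖ`, componentwise. -/
lemma aux_op_counit_app (jstar : C₁ ⥤ C₂) (jlow : C₂ ⥤ C₁) (adj1 : jlow ⊣ jstar) (Y : C₂ᵒᵖ) :
    (Adjunction.op adj1).counit.app Y =
      (adj1.unit.app (unop Y)).op := by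
  simp [Adjunction.op_counit, opEquiv]

lemma aux_op_unit_app (jstar : C₁ ⥤ C₂) (jup : C₂ ⥤ C₁) (adj2 : jstar ⊣ jup) (X : C₂ᵒᵖ) :
    (Adjunction.op adj2).unit.app X =
      (adj2.counit.app (unop X)).op := by
  simp [Adjunction.op_unit, opEquiv]

lemma aux_isIso_op_counit (jstar : C₁ ⥤ C₂) (jlow : C₂ ⥤ C₁) (adj1 : jlow ⊣ jstar)
    [IsIso adj1.unit] :
    IsIso ((Adjunction.op adj1).counit) := by
  have : ∀ Y, IsIso ((Adjunction.op adj1).counit.app Y) := by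
    intro Y
    rw [aux_op_counit_app]
    infer_instance
  exact NatIso.isIso_of_isIso_app _

end AuxGeneral

section AuxCmap

open Opposite

variable {A : Type*} [Category A] [Abelian A]
variable {B : Type*} [Category B] [Abelian B]

/-- The defining property of `cmap` under the hom-set equivalence. -/
lemma aux_homEquiv_cmap (jstar : A ⥤ B) (jlow jup : B ⥤ A)
    (adj1 : jlow ⊣ jstar) (adj2 : jstar ⊣ jup) [IsIso adj2.counit] (N : B) :
    adj1.homEquiv N (jup.obj N) (cmap jstar jlow jup adj1 adj2 N) = inv (adj2.counit.app N) := by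
  simp [cmap]

/-- Square lemma: the adjoint-uniqueness isomorphisms conjugate the canonical map of one
gluing datum into that of any other gluing datum with the same middle functor. -/
lemma aux_cmap_conj (G : A ⥤ B) (L R L' R' : B ⥤ A)
    (adjL : L ⊣ G) (adjR : G ⊣ R) (adjL' : L' ⊣ G) (adjR' : G ⊣ R')
    [IsIso adjR.counit] [IsIso adjR'.counit] (x : B) :
    (Adjunction.leftAdjointUniq adjL' adjL).hom.app x ≫
        cmap G L R adjL adjR x ≫ (Adjunction.rightAdjointUniq adjR adjR').hom.app x =
      cmap G L' R' adjL' adjR' x := by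
  apply (adjL'.homEquiv x (R'.obj x)).injective
  rw [aux_homEquiv_cmap]
  rw [Adjunction.homEquiv_naturality_right, Adjunction.homEquiv_leftAdjointUniq_hom_app,
    Functor.map_comp]
  have h1 : adjL.unit.app x ≫ G.map (cmap G L R adjL adjR x) = inv (adjR.counit.app x) := by
    have h := aux_homEquiv_cmap G L R adjL adjR x
    rwa [Adjunction.homEquiv_unit] at h
  rw [reassoc_of% h1]
  rw [IsIso.inv_comp_eq, IsIso.eq_comp_inv, Adjunction.rightAdjointUniq_hom_app_counit]

/-- `cmap` is unchanged when both adjunctions are transported along a natural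
isomorphism of the middle functor. -/
lemma aux_cmap_ofNatIso {G G' : A ⥤ B} {L R : B ⥤ A}
    (adjL : L ⊣ G) (adjR : G ⊣ R) (ρ : G ≅ G') [IsIso adjR.counit]
    [IsIso ((adjR.ofNatIsoLeft ρ).counit)] (x : B) :
    cmap G' L R (adjL.ofNatIsoRight ρ) (adjR.ofNatIsoLeft ρ) x = cmap G L R adjL adjR x := by
  unfold cmap
  rw [aux_ofNatIsoRight_homEquiv_symm]
  congr 1
  have h1 : inv ((adjR.ofNatIsoLeft ρ).counit.app x) =
      inv (adjR.counit.app x) ≫ ρ.hom.app (R.obj x) := by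
    apply IsIso.inv_eq_of_hom_inv_id
    rw [aux_ofNatIsoLeft_counit_app]
    simp
  rw [h1]
  simp

/-- `cmap` for the gluing datum composed with an equivalence on the open (`B`) side. -/
lemma aux_cmap_compEquivB {B' : Type*} [Category B'] [Abelian B']
    (jstar : A ⥤ B) (jlow jup : B ⥤ A)
    (adj1 : jlow ⊣ jstar) (adj2 : jstar ⊣ jup) [IsIso adj2.counit]
    (E : B' ≌ B) [IsIso ((adj2.comp E.symm.toAdjunction).counit)] (x : B') :
    cmap (jstar ⋙ E.inverse) (E.functor ⋙ jlow) (E.functor ⋙ jup)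
        (E.toAdjunction.comp adj1) (adj2.comp E.symm.toAdjunction) x =
      cmap jstar jlow jup adj1 adj2 (E.functor.obj x) := by
  unfold cmap
  rw [Adjunction.comp_homEquiv]
  simp only [Equiv.symm_trans_apply]
  congr 1
  have h1 : (adj2.comp E.symm.toAdjunction).counit.app x =
      E.inverse.map (adj2.counit.app (E.functor.obj x)) ≫ E.unitInv.app x := by
    rw [Adjunction.comp_counit_app]
    rfl
  have h2 : inv ((adj2.comp E.symm.toAdjunction).counit.app x) =
      E.unit.app x ≫ E.inverse.map (inv (adj2.counit.app (E.functor.obj x))) := by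
    apply IsIso.inv_eq_of_hom_inv_id
    rw [h1]
    simp [← Functor.map_comp]
  rw [h2, Equiv.symm_apply_eq]
  simp [Adjunction.homEquiv_unit]

/-- `cmap` for the gluing datum composed with an equivalence on the ambient (`A`) side. -/
lemma aux_cmap_compEquivA {A' : Type*} [Category A'] [Abelian A']
    (jstar : A ⥤ B) (jlow jup : B ⥤ A)
    (adj1 : jlow ⊣ jstar) (adj2 : jstar ⊣ jup) [IsIso adj2.counit]
    (E : A ≌ A') [IsIso ((E.symm.toAdjunction.comp adj2).counit)] (x : B) :
    cmap (E.inverse ⋙ jstar) (jlow ⋙ E.functor) (jup ⋙ E.functor)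
        (adj1.comp E.toAdjunction) (E.symm.toAdjunction.comp adj2) x =
      E.functor.map (cmap jstar jlow jup adj1 adj2 x) := by
  unfold cmap
  rw [Adjunction.comp_homEquiv]
  simp only [Equiv.symm_trans_apply]
  have h1 : (E.symm.toAdjunction.comp adj2).counit.app x =
      jstar.map (E.unitInv.app (jup.obj x)) ≫ adj2.counit.app x := by
    rw [Adjunction.comp_counit_app]
    rfl
  have h2 : inv ((E.symm.toAdjunction.comp adj2).counit.app x) =
      inv (adj2.counit.app x) ≫ jstar.map (E.unit.app (jup.obj x)) := by
    apply IsIso.inv_eq_of_hom_inv_id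
    rw [h1]
    simp [← Functor.map_comp]
  rw [h2]
  simp [Adjunction.homEquiv_counit, Adjunction.homEquiv_unit]

/-- `cmap` for the opposite gluing datum. -/
lemma aux_cmap_op (jstar : A ⥤ B) (jlow jup : B ⥤ A)
    (adj1 : jlow ⊣ jstar) (adj2 : jstar ⊣ jup) [IsIso adj1.unit] [IsIso adj2.counit]
    [IsIso ((Adjunction.op adj1).counit)] (x : B) :
    cmap jstar.op jup.op jlow.op (Adjunction.op adj2)
        (Adjunction.op adj1) (op x) =
      (cmap jstar jlow jup adj1 adj2 x).op := by
  have key : adj1.unit.app x ≫ jstar.map (cmap jstar jlow jup adj1 adj2 x) =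
      inv (adj2.counit.app x) := by
    have h := aux_homEquiv_cmap jstar jlow jup adj1 adj2 x
    rwa [Adjunction.homEquiv_unit] at h
  have key' : jstar.map (cmap jstar jlow jup adj1 adj2 x) =
      inv (adj1.unit.app x) ≫ inv (adj2.counit.app x) := by
    rw [← key]
    simp
  have key2 : jstar.map (cmap jstar jlow jup adj1 adj2 x) ≫ adj2.counit.app x =
      inv (adj1.unit.app x) := by
    rw [key']
    simp
  set c := cmap jstar jlow jup adj1 adj2 x with hc
  apply ((Adjunction.op adj2).homEquiv (op x)
    (jlow.op.obj (op x))).injective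
  unfold cmap
  rw [Equiv.apply_symm_apply, Adjunction.homEquiv_unit, aux_op_unit_app]
  apply IsIso.inv_eq_of_hom_inv_id
  rw [aux_op_counit_app]
  have h5 : (adj2.counit.app (unop (op x))).op ≫ jstar.op.map c.op =
      (jstar.map c ≫ adj2.counit.app x).op := rfl
  rw [h5, key2, ← op_comp]
  simp

end AuxCmap

/-- the intermediate extension commutes with duality.  Given
contravariant equivalences `D : Aᵒᵖ ⥤ A` and `DU : Bᵒᵖ ⥤ B` (modeling Verdier
duality) together with a natural isomorphism `j^* ∘ D ≅ D_U ∘ (j^*)ᵒᵖ`, for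
every `N : B` there is an isomorphism `D(j_!* N) ≅ j_!*(D_U N)`. -/
theorem interExt_commutes_with_duality
    (jstar : A ⥤ B) (jlow jup : B ⥤ A)
    (adj1 : jlow ⊣ jstar) (adj2 : jstar ⊣ jup)
    [IsIso adj1.unit] [IsIso adj2.counit]
    [PreservesFiniteLimits jstar] [PreservesFiniteColimits jstar]
    (D : Aᵒᵖ ⥤ A) (DU : Bᵒᵖ ⥤ B) [D.IsEquivalence] [DU.IsEquivalence]
    (comm : D ⋙ jstar ≅ jstar.op ⋙ DU)
    (N : B) :
    Nonempty
      (D.obj (Opposite.op (interExt jstar jlow jup adj1 adj2 N)) ≅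
        interExt jstar jlow jup adj1 adj2 (DU.obj (Opposite.op N))) := by
  open Opposite in
  -- the equivalences determined by the dualities
  let EA : Aᵒᵖ ≌ A := D.asEquivalence
  let EU : Bᵒᵖ ≌ B := DU.asEquivalence
  -- the comparison isomorphism between the two "middle" functors
  let ρ : EA.inverse ⋙ jstar.op ≅ jstar ⋙ EU.inverse :=
    (Functor.rightUnitor _).symm ≪≫
      Functor.isoWhiskerLeft (EA.inverse ⋙ jstar.op) EU.unitIso ≪≫
      Functor.isoWhiskerRight (Functor.isoWhiskerLeft EA.inverse comm.symm) EU.inverse ≪≫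
      Functor.isoWhiskerRight (Functor.isoWhiskerRight EA.counitIso jstar) EU.inverse
  -- the opposite adjunctions
  let adjop1 : jstar.op ⊣ jlow.op := Adjunction.op adj1
  let adjop2 : jup.op ⊣ jstar.op := Adjunction.op adj2
  haveI iop : IsIso adjop1.counit := aux_isIso_op_counit jstar jlow adj1
  -- the four composite adjunctions
  let adjG1 : jup.op ⋙ D ⊣ EA.inverse ⋙ jstar.op := adjop2.comp EA.toAdjunction
  let adjH1 : EA.inverse ⋙ jstar.op ⊣ jlow.op ⋙ D := EA.symm.toAdjunction.comp adjop1
  let adjG2 : DU ⋙ jlow ⊣ jstar ⋙ EU.inverse := EU.toAdjunction.comp adj1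
  let adjH2 : jstar ⋙ EU.inverse ⊣ DU ⋙ jup := adj2.comp EU.symm.toAdjunction
  haveI iEA : IsIso EA.symm.toAdjunction.counit := by
    simp only [Equivalence.toAdjunction_counit]
    infer_instance
  haveI iEU : IsIso EU.symm.toAdjunction.counit := by
    simp only [Equivalence.toAdjunction_counit]
    infer_instance
  haveI iH1 : IsIso adjH1.counit := aux_isIso_comp_counit _ _
  haveI iH2 : IsIso adjH2.counit := @aux_isIso_comp_counit _ _ _ _ _ _ _ _ _ _ adj2 EU.symm.toAdjunction _ iEU
  -- the adjunctions transported to the common middle functor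
  let adjG1' : jup.op ⋙ D ⊣ jstar ⋙ EU.inverse := adjG1.ofNatIsoRight ρ
  let adjH1' : jstar ⋙ EU.inverse ⊣ jlow.op ⋙ D := adjH1.ofNatIsoLeft ρ
  haveI iH1' : IsIso adjH1'.counit := aux_isIso_ofNatIsoLeft_counit adjH1 ρ
  -- the canonical map of the dual gluing datum is `D.map (cmap N).op`
  have e_left : cmap (jstar ⋙ EU.inverse) (jup.op ⋙ D) (jlow.op ⋙ D) adjG1' adjH1' (op N) =
      D.map (cmap jstar jlow jup adj1 adj2 N).op := by
    haveI : IsIso (EA.symm.toAdjunction.comp adjop1).counit := iH1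
    rw [aux_cmap_ofNatIso adjG1 adjH1 ρ (op N)]
    have h2 := aux_cmap_compEquivA jstar.op jup.op jlow.op adjop2 adjop1 EA (op N)
    have h3 := aux_cmap_op jstar jlow jup adj1 adj2 N
    rw [h3] at h2
    exact h2
  -- the canonical map of the second gluing datum is `cmap M`
  have e_right : cmap (jstar ⋙ EU.inverse) (DU ⋙ jlow) (DU ⋙ jup) adjG2 adjH2 (op N) =
      cmap jstar jlow jup adj1 adj2 (DU.obj (op N)) :=
    haveI : IsIso (adj2.comp EU.symm.toAdjunction).counit := iH2
    aux_cmap_compEquivB jstar jlow jup adj1 adj2 EU (op N)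
  -- the conjugation square
  have sq : (Adjunction.leftAdjointUniq adjG2 adjG1').hom.app (op N) ≫
      D.map (cmap jstar jlow jup adj1 adj2 N).op ≫
      (Adjunction.rightAdjointUniq adjH1' adjH2).hom.app (op N) =
      cmap jstar jlow jup adj1 adj2 (DU.obj (op N)) := by
    have h := aux_cmap_conj (jstar ⋙ EU.inverse) (jup.op ⋙ D) (jlow.op ⋙ D)
      (DU ⋙ jlow) (DU ⋙ jup) adjG1' adjH1' adjG2 adjH2 (op N)
    rw [e_left, e_right] at h
    exact h
  -- now compare images
  set c := cmap jstar jlow jup adj1 adj2 N with hc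
  set φ := (Adjunction.leftAdjointUniq adjG2 adjG1').hom.app (op N) with hφ
  set ψ := (Adjunction.rightAdjointUniq adjH1' adjH2).hom.app (op N) with hψ
  haveI : IsIso φ := by
    rw [hφ]; infer_instance
  haveI : IsIso ψ := by
    rw [hψ]; infer_instance
  -- step 1 : `D` sends the image of `c` to the image of `D.map c.op`
  haveI : StrongEpi ((image.ι c).op) := strongEpi_of_epi _
  haveI : StrongEpi (D.map (image.ι c).op) := inferInstance
  haveI : Mono (D.map (factorThruImage c).op) := by
    haveI : D.PreservesMonomorphisms :=
      Functor.preservesMonomorphisms_of_adjunction D.asEquivalence.symm.toAdjunction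
    infer_instance
  have fac1 : D.map (image.ι c).op ≫ D.map (factorThruImage c).op = D.map c.op := by
    rw [← D.map_comp, ← op_comp, image.fac]
  let iso₁ : D.obj (op (image c)) ≅ image (D.map c.op) :=
    image.isoStrongEpiMono (D.map (image.ι c).op) (D.map (factorThruImage c).op) fac1
  -- step 2 : conjugating by isomorphisms does not change the image
  haveI : StrongEpi (φ ≫ factorThruImage (D.map c.op)) := strongEpi_of_epi _
  have fac2 : (φ ≫ factorThruImage (D.map c.op)) ≫ (image.ι (D.map c.op) ≫ ψ) =
      cmap jstar jlow jup adj1 adj2 (DU.obj (op N)) := by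
    rw [← sq]
    simp [image.fac]
  let iso₂ : image (D.map c.op) ≅ image (cmap jstar jlow jup adj1 adj2 (DU.obj (op N))) :=
    image.isoStrongEpiMono (φ ≫ factorThruImage (D.map c.op)) (image.ι (D.map c.op) ≫ ψ) fac2
  exact ⟨iso₁ ≪≫ iso₂⟩
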